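/- Let X_1,...,X_n be i.i.d. samples from p_tr and X'_1,...,X'_{n'} i.i.d. samples from p_tr' (independent of each other), where p_tr = θ·p_+ + (1-θ)·p_- and p_tr' = θ'·p_+ + (1-θ')·p_- with θ > θ'. Define the empirical risk R̂_UU(g) = (1/n)Σ_i [a·ℓ(g(X_i)) + b·ℓ(-g(X_i))] + (1/n')Σ_j [d·ℓ(g(X'_j)) + c·ℓ(-g(X'_j))] with a = (1-θ')π/(θ-θ'), b = -θ'(1-π)/(θ-θ'), c = θ(1-π)/(θ-θ'), d = -(1-θ)π/(θ-θ'). Then for any fixed measurable g with ℓ(±g(·)) integrable, E[R̂_UU(g)] = R(g) := π·E_{p_+}[ℓ(g(X))] + (1-π)·E_{p_-}[ℓ(-g(X))]. -/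

import Mathlib

open MeasureTheory

private lemma bdd_integrable {α : Type*} [MeasurableSpace α] (μ : Measure α)
    [IsFiniteMeasure μ] {f : α → ℝ} (hf : Measurable f) {C : ℝ}
    (hC : ∀ x, |f x| ≤ C) : Integrable f μ :=
  ⟨hf.aestronglyMeasurable, HasFiniteIntegral.of_bounded (C := C) (ae_of_all _ fun x => by
    simpa [Real.norm_eq_abs] using hC x)⟩

private lemma mix_integral {Ω X : Type*} [MeasurableSpace Ω] [MeasurableSpace X]
    (P : Measure Ω) [IsProbabilityMeasure P]
    (pP pN : Measure X) [IsProbabilityMeasure pP] [IsProbabilityMeasure pN]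
    (θ : ℝ) (hθ : θ ∈ Set.Icc (0:ℝ) 1)
    (T : Ω → X) (hT : Measurable T)
    (hlaw : Measure.map T P = ENNReal.ofReal θ • pP + ENNReal.ofReal (1 - θ) • pN)
    (h : X → ℝ) (hh : Measurable h) {C : ℝ} (hC : ∀ x, |h x| ≤ C) :
    ∫ ω, h (T ω) ∂P = θ * ∫ x, h x ∂pP + (1 - θ) * ∫ x, h x ∂pN := by
  rw [← integral_map hT.aemeasurable hh.aestronglyMeasurable, hlaw,
    integral_add_measure ((bdd_integrable pP hh hC).smul_measure ENNReal.ofReal_ne_top)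
      ((bdd_integrable pN hh hC).smul_measure ENNReal.ofReal_ne_top),
    integral_smul_measure, integral_smul_measure,
    ENNReal.toReal_ofReal hθ.1, ENNReal.toReal_ofReal (by linarith [hθ.2])]
  simp [smul_eq_mul]

/-- Unbiasedness of the UU empirical risk estimator: if `X₁,…,Xₙ` have law
`p_tr = θ·pP + (1-θ)·pN` and `X'₁,…,X'ₙ'` have law `p_tr' = θ'·pP + (1-θ')·pN`
(θ > θ'), then the expectation of the UU empirical risk equals the true risk
`R(g) = π·E_{pP}[ℓ(g)] + (1-π)·E_{pN}[ℓ(-g)]`. -/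
theorem stmt7 {Ω X : Type*} [MeasurableSpace Ω] [MeasurableSpace X]
    (P : Measure Ω) [IsProbabilityMeasure P]
    (pP pN : Measure X) [IsProbabilityMeasure pP] [IsProbabilityMeasure pN]
    (π θ θ' : ℝ) (hπ : π ∈ Set.Icc (0:ℝ) 1)
    (hθ : θ ∈ Set.Icc (0:ℝ) 1) (hθ' : θ' ∈ Set.Icc (0:ℝ) 1) (hlt : θ' < θ)
    (n n' : ℕ) (hn : 0 < n) (hn' : 0 < n')
    (Xs : Fin n → Ω → X) (Xs' : Fin n' → Ω → X)
    (hXm : ∀ i, Measurable (Xs i)) (hXm' : ∀ j, Measurable (Xs' j))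
    (hlaw : ∀ i, Measure.map (Xs i) P = ENNReal.ofReal θ • pP + ENNReal.ofReal (1 - θ) • pN)
    (hlaw' : ∀ j, Measure.map (Xs' j) P = ENNReal.ofReal θ' • pP + ENNReal.ofReal (1 - θ') • pN)
    (g : X → ℝ) (hg : Measurable g)
    (ℓ : ℝ → ℝ) (hℓ : Measurable ℓ) (hb : ∃ C, ∀ z, |ℓ z| ≤ C) :
    (∫ ω, ((n : ℝ)⁻¹ * ∑ i, (((1 - θ') * π / (θ - θ')) * ℓ (g (Xs i ω))
              + (-(θ' * (1 - π)) / (θ - θ')) * ℓ (-g (Xs i ω)))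
        + (n' : ℝ)⁻¹ * ∑ j, ((-((1 - θ) * π) / (θ - θ')) * ℓ (g (Xs' j ω))
              + (θ * (1 - π) / (θ - θ')) * ℓ (-g (Xs' j ω)))) ∂P) =
    π * ∫ x, ℓ (g x) ∂pP + (1 - π) * ∫ x, ℓ (-g x) ∂pN := by
  obtain ⟨C, hC⟩ := hb
  set a : ℝ := (1 - θ') * π / (θ - θ') with ha
  set b : ℝ := -(θ' * (1 - π)) / (θ - θ') with hbb
  set d : ℝ := -((1 - θ) * π) / (θ - θ') with hd
  set c : ℝ := θ * (1 - π) / (θ - θ') with hc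
  have hg1 : Measurable fun x => ℓ (g x) := hℓ.comp hg
  have hg2 : Measurable fun x => ℓ (-g x) := hℓ.comp hg.neg
  have hC1 : ∀ x, |ℓ (g x)| ≤ C := fun x => hC _
  have hC2 : ∀ x, |ℓ (-g x)| ≤ C := fun x => hC _
  set A : ℝ := ∫ x, ℓ (g x) ∂pP
  set B : ℝ := ∫ x, ℓ (g x) ∂pN
  set A' : ℝ := ∫ x, ℓ (-g x) ∂pP
  set B' : ℝ := ∫ x, ℓ (-g x) ∂pN
  have e1 : ∀ i, ∫ ω, ℓ (g (Xs i ω)) ∂P = θ * A + (1 - θ) * B := fun i =>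
    mix_integral P pP pN θ hθ _ (hXm i) (hlaw i) _ hg1 hC1
  have e2 : ∀ i, ∫ ω, ℓ (-g (Xs i ω)) ∂P = θ * A' + (1 - θ) * B' := fun i =>
    mix_integral P pP pN θ hθ _ (hXm i) (hlaw i) _ hg2 hC2
  have e1' : ∀ j, ∫ ω, ℓ (g (Xs' j ω)) ∂P = θ' * A + (1 - θ') * B := fun j =>
    mix_integral P pP pN θ' hθ' _ (hXm' j) (hlaw' j) _ hg1 hC1
  have e2' : ∀ j, ∫ ω, ℓ (-g (Xs' j ω)) ∂P = θ' * A' + (1 - θ') * B' := fun j =>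
    mix_integral P pP pN θ' hθ' _ (hXm' j) (hlaw' j) _ hg2 hC2
  have int1 : ∀ i, Integrable (fun ω => ℓ (g (Xs i ω))) P := fun i =>
    bdd_integrable P (hg1.comp (hXm i)) (fun _ => hC _)
  have int2 : ∀ i, Integrable (fun ω => ℓ (-g (Xs i ω))) P := fun i =>
    bdd_integrable P (hg2.comp (hXm i)) (fun _ => hC _)
  have int1' : ∀ j, Integrable (fun ω => ℓ (g (Xs' j ω))) P := fun j =>
    bdd_integrable P (hg1.comp (hXm' j)) (fun _ => hC _)
  have int2' : ∀ j, Integrable (fun ω => ℓ (-g (Xs' j ω))) P := fun j =>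
    bdd_integrable P (hg2.comp (hXm' j)) (fun _ => hC _)
  have J1 : ∀ i, Integrable (fun ω => a * ℓ (g (Xs i ω)) + b * ℓ (-g (Xs i ω))) P :=
    fun i => ((int1 i).const_mul a).add ((int2 i).const_mul b)
  have J2 : ∀ j, Integrable (fun ω => d * ℓ (g (Xs' j ω)) + c * ℓ (-g (Xs' j ω))) P :=
    fun j => ((int1' j).const_mul d).add ((int2' j).const_mul c)
  rw [integral_add (((integrable_finset_sum _ (fun i _ => J1 i)).const_mul _))
      (((integrable_finset_sum _ (fun j _ => J2 j)).const_mul _)),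
    integral_const_mul, integral_const_mul,
    integral_finset_sum _ (fun i _ => J1 i), integral_finset_sum _ (fun j _ => J2 j)]
  have s1 : ∀ i : Fin n, ∫ ω, (a * ℓ (g (Xs i ω)) + b * ℓ (-g (Xs i ω))) ∂P
      = a * (θ * A + (1 - θ) * B) + b * (θ * A' + (1 - θ) * B') := by
    intro i
    rw [integral_add ((int1 i).const_mul a) ((int2 i).const_mul b),
      integral_const_mul, integral_const_mul, e1 i, e2 i]
  have s2 : ∀ j : Fin n', ∫ ω, (d * ℓ (g (Xs' j ω)) + c * ℓ (-g (Xs' j ω))) ∂P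
      = d * (θ' * A + (1 - θ') * B) + c * (θ' * A' + (1 - θ') * B') := by
    intro j
    rw [integral_add ((int1' j).const_mul d) ((int2' j).const_mul c),
      integral_const_mul, integral_const_mul, e1' j, e2' j]
  simp only [s1, s2, Finset.sum_const, Finset.card_univ, Fintype.card_fin, nsmul_eq_mul]
  have hne : θ - θ' ≠ 0 := sub_ne_zero.2 (ne_of_gt hlt)
  have hnn : (n : ℝ) ≠ 0 := Nat.cast_ne_zero.2 hn.ne'
  have hnn' : (n' : ℝ) ≠ 0 := Nat.cast_ne_zero.2 hn'.ne'
  simp only [ha, hbb, hc, hd]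
  field_simp [ha, hbb, hc, hd]
  ring
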